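/- Let A be an m×n real matrix and let B be any nonsingular k×k submatrix of A (k ≤ min(m,n)). Then ‖B⁻¹‖_C ≥ 1/(k·σ_k(A)). -/

import Mathlib

open Matrix

/-- The maximum absolute entry norm `‖·‖_C` of a matrix. -/
noncomputable def cnorm {m n : Type*} [Fintype m] [Fintype n]
    (M : Matrix m n ℝ) : ℝ := ⨆ i, ⨆ j, |M i j|

/-- The `k`-th largest value (1-indexed) of a finite family of reals. -/
noncomputable def kthLargest {ι : Type*} [Fintype ι] (f : ι → ℝ) (k : ℕ) : ℝ :=
  ((Finset.univ.val.map f).sort (· ≤ ·)).getD (Fintype.card ι - k) 0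

/-- The `k`-th largest singular value (1-indexed) of a real matrix,
i.e. the square root of the `k`-th largest eigenvalue of `Aᴴ * A`. -/
noncomputable def singularValue {m n : Type*} [Fintype m] [Fintype n] [DecidableEq n]
    (A : Matrix m n ℝ) (k : ℕ) : ℝ :=
  Real.sqrt (kthLargest (Matrix.isHermitian_conjTranspose_mul_self A).eigenvalues k)

lemma abs_le_cnorm {m n : Type*} [Fintype m] [Fintype n]
    (M : Matrix m n ℝ) (i : m) (j : n) : |M i j| ≤ cnorm M := by
  have h1 : |M i j| ≤ ⨆ j', |M i j'| :=
    le_ciSup (f := fun j' => |M i j'|) (Set.Finite.bddAbove (Set.finite_range _)) j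
  exact h1.trans (le_ciSup (f := fun i' => ⨆ j', |M i' j'|)
    (Set.Finite.bddAbove (Set.finite_range _)) i)

theorem kthLargest_facts {N : ℕ} (f : Fin N → ℝ) (k : ℕ) (hk1 : 1 ≤ k) (hkn : k ≤ N) :
    (∃ i, kthLargest f k = f i) ∧
    N - k + 1 ≤ (Finset.univ.filter fun i => f i ≤ kthLargest f k).card := by
  classical
  set l := ((Finset.univ.val.map f).sort (· ≤ ·)) with hl
  have hlen : l.length = N := by
    simp [hl, Multiset.length_sort]
  have hlt : N - k < l.length := by omega
  have hkth : kthLargest f k = l[N - k] := by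
    rw [kthLargest, ← hl, Fintype.card_fin, List.getD_eq_getElem l 0 hlt]
  constructor
  · have hmem : l[N-k] ∈ l := List.getElem_mem hlt
    have : l[N-k] ∈ (Finset.univ.val.map f) := by
      rw [← Multiset.sort_eq (Finset.univ.val.map f) (· ≤ ·), ← hl]
      exact_mod_cast hmem
    obtain ⟨i, _, hi⟩ := Multiset.mem_map.mp this
    exact ⟨i, by rw [hkth, hi]⟩
  · have hsort : l.Pairwise (· ≤ ·) := Multiset.pairwise_sort _ _
    have hcount : (Finset.univ.filter fun i => f i ≤ kthLargest f k).card
        = l.countP (fun x => decide (x ≤ kthLargest f k)) := by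
      rw [← Multiset.coe_countP, hl, Multiset.sort_eq, Multiset.countP_map]
      rfl
    rw [hcount]
    have htake : ∀ x ∈ l.take (N - k + 1), x ≤ kthLargest f k := by
      intro x hx
      rw [List.mem_take_iff_getElem] at hx
      obtain ⟨i, hi, rfl⟩ := hx
      have hiN : i ≤ N - k := by omega
      rw [hkth]
      rcases eq_or_lt_of_le hiN with h | h
      · subst h; rfl
      · exact (List.pairwise_iff_getElem.mp hsort) i (N-k) (by omega) hlt h
    calc N - k + 1 = (l.take (N-k+1)).length := by rw [List.length_take]; omega
      _ = (l.take (N-k+1)).countP (fun x => decide (x ≤ kthLargest f k)) := by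
          rw [List.countP_eq_length.mpr (by intro x hx; simpa using htake x hx)]
      _ ≤ l.countP (fun x => decide (x ≤ kthLargest f k)) := by
          conv_rhs => rw [← List.take_append_drop (N-k+1) l]
          rw [List.countP_append]
          omega

lemma dot_expand {ι α : Type*} [Fintype ι] [Fintype α] [DecidableEq ι]
    (v : ι → (α → ℝ)) (hv : ∀ i j, v i ⬝ᵥ v j = if i = j then 1 else 0)
    (b d : ι → ℝ) :
    (∑ i, b i • v i) ⬝ᵥ (∑ j, d j • v j) = ∑ i, b i * d i := by
  have key : ∀ t, (∑ i, b i • v i) t * (∑ j, d j • v j) t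
      = ∑ i, ∑ j, (b i * d j) * (v i t * v j t) := by
    intro t
    simp only [Finset.sum_apply, Pi.smul_apply, smul_eq_mul, Finset.sum_mul_sum]
    exact Finset.sum_congr rfl fun i _ => Finset.sum_congr rfl fun j _ => by ring
  calc (∑ i, b i • v i) ⬝ᵥ (∑ j, d j • v j)
      = ∑ t, ∑ i, ∑ j, (b i * d j) * (v i t * v j t) := by
        simp only [dotProduct]; exact Finset.sum_congr rfl fun t _ => key t
    _ = ∑ i, ∑ j, (b i * d j) * (v i ⬝ᵥ v j) := by
        rw [Finset.sum_comm]
        refine Finset.sum_congr rfl fun i _ => ?_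
        rw [Finset.sum_comm]
        exact Finset.sum_congr rfl fun j _ => by rw [dotProduct, Finset.mul_sum]
    _ = ∑ i, b i * d i := by
        simp [hv, Finset.sum_ite_eq', mul_ite]

/-- For any nonsingular `k × k` submatrix `B` of an `m × n` real matrix `A`,
`‖B⁻¹‖_C ≥ 1 / (k * σ_k(A))`. -/
theorem cnorm_inv_submatrix_ge {m n k : ℕ} (A : Matrix (Fin m) (Fin n) ℝ)
    (r : Fin k → Fin m) (c : Fin k → Fin n)
    (hr : Function.Injective r) (hc : Function.Injective c)
    (hB : IsUnit (A.submatrix r c).det) :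
    cnorm (A.submatrix r c)⁻¹ ≥ 1 / (k * singularValue A k) := by
  classical
  rcases Nat.eq_zero_or_pos k with hk0 | hk1
  · subst hk0
    have h1 : cnorm (A.submatrix r c)⁻¹ = 0 := by
      rw [cnorm]
      exact Real.iSup_of_isEmpty _
    rw [h1]
    norm_num
  · -- main case
    have hkn : k ≤ n := by
      have := Fintype.card_le_of_injective c hc
      simpa using this
    set hM := Matrix.isHermitian_conjTranspose_mul_self A with hMdef
    set μ : Fin n → ℝ := hM.eigenvalues with hμdef
    set lam : ℝ := kthLargest μ k with hlamdef
    have hσ : singularValue A k = Real.sqrt lam := rfl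
    -- eigenvectors as plain vectors
    set u : Fin n → (Fin n → ℝ) := fun i => ⇑(hM.eigenvectorBasis i) with hu
    have huv : ∀ i j, u i ⬝ᵥ u j = if i = j then 1 else 0 := by
      intro i j
      have h := orthonormal_iff_ite.mp hM.eigenvectorBasis.orthonormal i j
      simp [PiLp.inner_apply, RCLike.inner_apply, starRingEnd_apply] at h
      rw [← h, dotProduct]
      exact Finset.sum_congr rfl fun x _ => mul_comm _ _
    have hMu : ∀ i, (Aᴴ * A) *ᵥ u i = μ i • u i := fun i => hM.mulVec_eigenvectorBasis i
    -- eigenvalue facts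
    obtain ⟨hlam_mem, hScard⟩ := kthLargest_facts μ k hk1 hkn
    have hlam0 : 0 ≤ lam := by
      obtain ⟨i, hi⟩ := hlam_mem
      rw [hlamdef, hi]
      exact (Matrix.posSemidef_conjTranspose_mul_self A).eigenvalues_nonneg i
    set S : Finset (Fin n) := Finset.univ.filter (fun i => μ i ≤ lam) with hSdef
    -- the two subspaces
    set vv : Fin k → (Fin n → ℝ) := fun i => Pi.single (c i) 1 with hvvdef
    have hvv : ∀ i j, vv i ⬝ᵥ vv j = if i = j then 1 else 0 := by
      intro i j
      by_cases h : i = j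
      · subst h; simp [hvvdef, dotProduct, Pi.single_apply]
      · have hcc : c i ≠ c j := fun hcc => h (hc hcc)
        simp [hvvdef, dotProduct, Pi.single_apply, h, hcc, Ne.symm hcc, Finset.sum_ite_eq]
    set uu : {i // i ∈ S} → (Fin n → ℝ) := fun i => u i.val with huudef
    have huu : ∀ i j, uu i ⬝ᵥ uu j = if i = j then 1 else 0 := by
      intro i j
      rw [huudef]
      simp only [huv i.val j.val]
      simp only [Subtype.ext_iff]
    set V : Submodule ℝ (Fin n → ℝ) := Submodule.span ℝ (Set.range vv) with hVdef
    set W : Submodule ℝ (Fin n → ℝ) := Submodule.span ℝ (Set.range uu) with hWdef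
    have hVli : LinearIndependent ℝ vv := by
      have h := (Pi.basisFun ℝ (Fin n)).linearIndependent.comp c hc
      simpa [hvvdef, Function.comp_def] using h
    have hWli : LinearIndependent ℝ uu :=
      ((hM.eigenvectorBasis.orthonormal.comp _ Subtype.val_injective).linearIndependent.map'
        (WithLp.linearEquiv 2 ℝ (Fin n → ℝ)).toLinearMap (LinearEquiv.ker _) : _)
    have hVrank : Module.finrank ℝ V = k := by
      rw [hVdef, finrank_span_eq_card hVli, Fintype.card_fin]
    have hWrank : Module.finrank ℝ W = S.card := by
      rw [hWdef, finrank_span_eq_card hWli, Fintype.card_coe]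
    have hsup : Module.finrank ℝ (V ⊔ W : Submodule ℝ (Fin n → ℝ)) ≤ n := by
      have := Submodule.finrank_le (V ⊔ W)
      simpa using this
    have hinf : 0 < Module.finrank ℝ (V ⊓ W : Submodule ℝ (Fin n → ℝ)) := by
      have h := Submodule.finrank_sup_add_finrank_inf_eq V W
      rw [hVrank, hWrank] at h
      omega
    obtain ⟨x, hxVW, hx0⟩ : ∃ x ∈ V ⊓ W, x ≠ 0 := by
      have : Nontrivial (V ⊓ W : Submodule ℝ (Fin n → ℝ)) := Module.finrank_pos_iff.mp hinf
      obtain ⟨z, hz⟩ := exists_ne (0 : (V ⊓ W : Submodule ℝ (Fin n → ℝ)))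
      exact ⟨z, z.2, fun h => hz (Subtype.ext h)⟩
    obtain ⟨a, hxa⟩ := (Submodule.mem_span_range_iff_exists_fun ℝ).mp (hxVW.1 : x ∈ V)
    obtain ⟨bb, hxb⟩ := (Submodule.mem_span_range_iff_exists_fun ℝ).mp (hxVW.2 : x ∈ W)
    -- Rayleigh quotient bound
    have hMx : (Aᴴ * A) *ᵥ x = ∑ i, (bb i * μ i.val) • uu i := by
      calc (Aᴴ * A) *ᵥ x = (Aᴴ * A).mulVecLin (∑ i, bb i • uu i) := by rw [hxb]; rfl
        _ = ∑ i, bb i • (Aᴴ * A).mulVecLin (uu i) := by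
            rw [map_sum]; exact Finset.sum_congr rfl fun i _ => map_smul _ _ _
        _ = ∑ i, (bb i * μ i.val) • uu i := by
            refine Finset.sum_congr rfl fun i _ => ?_
            rw [Matrix.mulVecLin_apply, huudef]
            rw [hMu i.val, smul_smul]
    have hray : x ⬝ᵥ ((Aᴴ * A) *ᵥ x) ≤ lam * (x ⬝ᵥ x) := by
      rw [hMx, ← hxb, dot_expand uu huu bb (fun i => bb i * μ i.val),
        dot_expand uu huu bb bb, Finset.mul_sum]
      refine Finset.sum_le_sum fun i _ => ?_
      have hiS : μ i.val ≤ lam := (Finset.mem_filter.mp i.2).2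
      nlinarith [sq_nonneg (bb i)]
    have hAxdot : x ⬝ᵥ ((Aᴴ * A) *ᵥ x) = (A *ᵥ x) ⬝ᵥ (A *ᵥ x) := by
      rw [← Matrix.mulVec_mulVec, Matrix.dotProduct_mulVec]
      congr 1
      funext p
      simp [Matrix.vecMul, Matrix.mulVec, dotProduct, Matrix.conjTranspose_apply, mul_comm]
    set B := A.submatrix r c with hBdef2
    have hAxeq : A *ᵥ x = ∑ i, a i • (fun p => A p (c i)) := by
      calc A *ᵥ x = A.mulVecLin (∑ i, a i • vv i) := by rw [hxa]; rfl
        _ = ∑ i, a i • A.mulVecLin (vv i) := by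
            rw [map_sum]; exact Finset.sum_congr rfl fun i _ => map_smul _ _ _
        _ = ∑ i, a i • (fun p => A p (c i)) := by
            refine Finset.sum_congr rfl fun i _ => ?_
            congr 1
            funext p
            simp [Matrix.mulVecLin_apply, hvvdef, Matrix.mulVec_single]
    have hAxr : ∀ t, (A *ᵥ x) (r t) = (B *ᵥ a) t := by
      intro t
      rw [hAxeq]
      simp [Finset.sum_apply, Matrix.mulVec, dotProduct, hBdef2,
        Matrix.submatrix_apply, mul_comm]
    have hsqsum : ∑ t, ((B *ᵥ a) t)^2 ≤ ∑ p, ((A *ᵥ x) p)^2 := by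
      calc ∑ t, ((B *ᵥ a) t)^2 = ∑ t, ((A *ᵥ x) (r t))^2 :=
            Finset.sum_congr rfl fun t _ => by rw [hAxr t]
        _ = ∑ p ∈ Finset.univ.image r, ((A *ᵥ x) p)^2 :=
            (Finset.sum_image (f := fun p => ((A *ᵥ x) p)^2) (g := r)
              (fun a _ b _ h => hr h)).symm
        _ ≤ ∑ p, ((A *ᵥ x) p)^2 :=
            Finset.sum_le_sum_of_subset_of_nonneg (Finset.subset_univ _)
              (fun _ _ _ => sq_nonneg _)
    have hxx : x ⬝ᵥ x = ∑ i, (a i)^2 := by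
      rw [← hxa, dot_expand vv hvv a a]
      exact Finset.sum_congr rfl fun i _ => (sq (a i)).symm
    have key : ∑ t, ((B *ᵥ a) t)^2 ≤ lam * ∑ i, (a i)^2 := by
      have h1 : (A *ᵥ x) ⬝ᵥ (A *ᵥ x) = ∑ p, ((A *ᵥ x) p)^2 := by
        simp [dotProduct, sq]
      calc ∑ t, ((B *ᵥ a) t)^2 ≤ ∑ p, ((A *ᵥ x) p)^2 := hsqsum
        _ = x ⬝ᵥ ((Aᴴ * A) *ᵥ x) := by rw [hAxdot, h1]
        _ ≤ lam * (x ⬝ᵥ x) := hray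
        _ = lam * ∑ i, (a i)^2 := by rw [hxx]
    have ha0 : a ≠ 0 := by
      intro h
      apply hx0
      rw [← hxa, h]
      simp
    -- endgame
    set w : Fin k → ℝ := B *ᵥ a with hwdef
    have haB : a = B⁻¹ *ᵥ w := by
      rw [hwdef, Matrix.mulVec_mulVec, Matrix.nonsing_inv_mul _ hB, Matrix.one_mulVec]
    set C := cnorm B⁻¹ with hCdef
    have hCij : ∀ i j, |B⁻¹ i j| ≤ C := fun i j => abs_le_cnorm _ i j
    obtain ⟨i₀, -, hmax⟩ := Finset.exists_max_image (Finset.univ : Finset (Fin k))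
      (fun i => |a i|) ⟨⟨0, hk1⟩, Finset.mem_univ _⟩
    set t := |a i₀| with htdef
    have hC0 : 0 ≤ C := (abs_nonneg _).trans (hCij i₀ i₀)
    have ht : 0 < t := by
      obtain ⟨i₁, hi₁⟩ := Function.ne_iff.mp ha0
      exact lt_of_lt_of_le (abs_pos.mpr hi₁) (hmax i₁ (Finset.mem_univ _))
    have h1 : t ≤ C * ∑ j, |w j| := by
      have hsum : a i₀ = ∑ j, B⁻¹ i₀ j * w j := by
        conv_lhs => rw [haB]
        rfl
      calc t = |∑ j, B⁻¹ i₀ j * w j| := by rw [htdef, hsum]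
        _ ≤ ∑ j, |B⁻¹ i₀ j * w j| := Finset.abs_sum_le_sum_abs _ _
        _ ≤ ∑ j, C * |w j| := Finset.sum_le_sum fun j _ => by
              rw [abs_mul]
              exact mul_le_mul_of_nonneg_right (hCij i₀ j) (abs_nonneg _)
        _ = C * ∑ j, |w j| := by rw [Finset.mul_sum]
    have h2 : (∑ j, |w j|)^2 ≤ (k:ℝ) * ∑ j, (w j)^2 := by
      have h := sq_sum_le_card_mul_sum_sq (s := (Finset.univ : Finset (Fin k)))
        (f := fun j => |w j|)
      simpa [sq_abs] using h
    have h4 : ∑ i, (a i)^2 ≤ (k:ℝ) * t^2 := by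
      have hi : ∀ i, (a i)^2 ≤ t^2 := fun i => by
        rw [← sq_abs (a i)]
        exact pow_le_pow_left₀ (abs_nonneg _) (hmax i (Finset.mem_univ _)) 2
      calc ∑ i, (a i)^2 ≤ ∑ _i : Fin k, t^2 := Finset.sum_le_sum fun i _ => hi i
        _ = (k:ℝ) * t^2 := by simp [mul_comm]
    have hfinal : 1 ≤ C * ((k:ℝ) * Real.sqrt lam) := by
      have ht2 : t^2 ≤ C^2 * ((k:ℝ)^2 * lam * t^2) := by
        calc t^2 ≤ (C * ∑ j, |w j|)^2 := pow_le_pow_left₀ ht.le h1 2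
          _ = C^2 * (∑ j, |w j|)^2 := by ring
          _ ≤ C^2 * ((k:ℝ) * ∑ j, (w j)^2) := by
              exact mul_le_mul_of_nonneg_left h2 (sq_nonneg _)
          _ ≤ C^2 * ((k:ℝ) * (lam * ∑ i, (a i)^2)) := by
              refine mul_le_mul_of_nonneg_left ?_ (sq_nonneg _)
              exact mul_le_mul_of_nonneg_left key (Nat.cast_nonneg _)
          _ ≤ C^2 * ((k:ℝ) * (lam * ((k:ℝ) * t^2))) := by
              refine mul_le_mul_of_nonneg_left ?_ (sq_nonneg _)
              refine mul_le_mul_of_nonneg_left ?_ (Nat.cast_nonneg _)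
              exact mul_le_mul_of_nonneg_left h4 hlam0
          _ = C^2 * ((k:ℝ)^2 * lam * t^2) := by ring
      have h5 : 1 ≤ C^2 * ((k:ℝ)^2 * lam) := by
        have ht2' : 1 * t^2 ≤ (C^2 * ((k:ℝ)^2 * lam)) * t^2 := by
          rw [one_mul]
          calc t^2 ≤ C^2 * ((k:ℝ)^2 * lam * t^2) := ht2
            _ = (C^2 * ((k:ℝ)^2 * lam)) * t^2 := by ring
        exact le_of_mul_le_mul_right ht2' (pow_pos ht 2)
      have hsqlam : Real.sqrt lam ^ 2 = lam := Real.sq_sqrt hlam0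
      have hy : 1 ≤ (C * ((k:ℝ) * Real.sqrt lam))^2 := by
        have hy2 : (C * ((k:ℝ) * Real.sqrt lam))^2 = C^2 * ((k:ℝ)^2 * lam) := by
          rw [mul_pow, mul_pow, hsqlam]
        rw [hy2]
        exact h5
      have hy0 : 0 ≤ C * ((k:ℝ) * Real.sqrt lam) :=
        mul_nonneg hC0 (mul_nonneg (Nat.cast_nonneg _) (Real.sqrt_nonneg _))
      by_contra hcon
      push_neg at hcon
      have : (C * ((k:ℝ) * Real.sqrt lam))^2 < 1 :=
        pow_lt_one₀ hy0 hcon (by norm_num)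
      linarith
    have hkσ : 0 < (k:ℝ) * Real.sqrt lam := by
      rcases lt_or_ge 0 ((k:ℝ) * Real.sqrt lam) with h | h
      · exact h
      · exfalso
        have h0 : C * ((k:ℝ) * Real.sqrt lam) ≤ 0 :=
          mul_nonpos_of_nonneg_of_nonpos hC0 h
        linarith
    rw [ge_iff_le, hσ, div_le_iff₀ hkσ]
    exact hfinal
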